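/- There exist functionals F_ε on the Hilbert space ℓ² that Γ-converge to the squared norm functional H({aᵢ}) = ‖{aᵢ}‖²_{ℓ²} but are not variationally equivalent to the constant family H. Concretely, the functionals F_ε({aᵢ}) := Σ_{i ≠ ⌊1/ε⌋} aᵢ² Γ-converge to H as ε → 0, yet (F_ε) is not variationally equivalent to (H). -/

import Mathlib

open Filter

noncomputable section

variable {X : Type*} [MetricSpace X]

/-- A sequence in a metric space is unbounded. -/
def SeqUnbounded {X : Type*} [MetricSpace X] (p : ℕ → X) : Prop :=
  ¬ Bornology.IsBounded (Set.range p)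

/-- `PrecWith d G F`: the order relation `(G_ε) ⪯ (F_ε)` realized by the specific
reparametrization `δ` (continuous and increasing on `[0,∞)` with `δ 0 = 0`):
for every sequence `εₙ → 0⁺` and every `(pₙ)` with `F_{εₙ}(pₙ) ≤ C`, there is `(qₙ)` with
`limsupₙ (G_{δ(εₙ)}(qₙ) − F_{εₙ}(pₙ)) ≤ 0` and either both sequences are unbounded or
`d(pₙ, qₙ) → 0`. Functionals take values in `ℝ ∪ {±∞}` (only `+∞` is relevant). -/
def PrecWith {X : Type*} [MetricSpace X] (δ : ℝ → ℝ) (G F : ℝ → X → EReal) : Prop :=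
  ContinuousOn δ (Set.Ici 0) ∧ StrictMonoOn δ (Set.Ici 0) ∧ δ 0 = 0 ∧
    ∀ ε : ℕ → ℝ, (∀ n, 0 < ε n) → Tendsto ε atTop (nhds 0) →
      ∀ p : ℕ → X, ∀ C : ℝ, (∀ n, F (ε n) (p n) ≤ (C : EReal)) →
        ∃ q : ℕ → X,
          limsup (fun n => G (δ (ε n)) (q n) - F (ε n) (p n)) atTop ≤ (0 : EReal) ∧
            ((SeqUnbounded p ∧ SeqUnbounded q) ∨
              Tendsto (fun n => dist (p n) (q n)) atTop (nhds 0))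

/-- The order relation `(G_ε) ⪯ (F_ε)` between families of functionals. -/
def Prec {X : Type*} [MetricSpace X] (G F : ℝ → X → EReal) : Prop :=
  ∃ δ : ℝ → ℝ, PrecWith δ G F

/-- Variational equivalence of two families of functionals:
`(F_ε) ≃ (G_ε)` iff `(F_ε) ⪯ (G_ε)` and `(G_ε) ⪯ (F_ε)`. -/
def VarEquiv {X : Type*} [MetricSpace X] (F G : ℝ → X → EReal) : Prop :=
  Prec F G ∧ Prec G F

/-- Equi-coercivity of a family of functionals: any sequence with bounded energy along a
vanishing sequence of scales is relatively compact. -/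
def EquiCoercive {X : Type*} [MetricSpace X] (F : ℝ → X → EReal) : Prop :=
  ∀ ε : ℕ → ℝ, (∀ n, 0 < ε n) → Tendsto ε atTop (nhds 0) →
    ∀ p : ℕ → X, ∀ C : ℝ, (∀ n, F (ε n) (p n) ≤ (C : EReal)) →
      IsCompact (closure (Set.range p))

/-- Γ-convergence of the family `(F_ε)` to `H` as `ε → 0`. -/
def GammaConv {X : Type*} [MetricSpace X] (F : ℝ → X → EReal) (H : X → EReal) : Prop :=
  (∀ ε : ℕ → ℝ, (∀ n, 0 < ε n) → Tendsto ε atTop (nhds 0) →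
      ∀ p : ℕ → X, ∀ x : X, Tendsto p atTop (nhds x) →
        H x ≤ liminf (fun n => F (ε n) (p n)) atTop) ∧
    (∀ ε : ℕ → ℝ, (∀ n, 0 < ε n) → Tendsto ε atTop (nhds 0) →
      ∀ x : X, ∃ p : ℕ → X, Tendsto p atTop (nhds x) ∧
        limsup (fun n => F (ε n) (p n)) atTop ≤ H x)

/-- The functionals `F_ε({aᵢ}) = Σ_{i ≠ ⌊1/ε⌋} aᵢ²` on `ℓ²`. -/
def Fell : ℝ → lp (fun _ : ℕ => ℝ) 2 → EReal := fun ε a =>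
  ((∑' i : ℕ, if i = ⌊1 / ε⌋₊ then 0 else (a i) ^ 2 : ℝ) : EReal)

/-- The squared-norm functional `H({aᵢ}) = ‖{aᵢ}‖²_{ℓ²}`. -/
def Hell : lp (fun _ : ℕ => ℝ) 2 → EReal := fun a => ((‖a‖ ^ 2 : ℝ) : EReal)

/-- The squares of the coordinates of an `ℓ²` element are summable. -/
lemma summable_sq (a : lp (fun _ : ℕ => ℝ) 2) : Summable fun i => (a i) ^ 2 := by
  have h := (lp.memℓp a).summable (p := 2) (by norm_num)
  simpa [Real.rpow_natCast, sq_abs] using h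

/-- The squared `ℓ²` norm is the sum of squares of coordinates. -/
lemma norm_sq_eq (a : lp (fun _ : ℕ => ℝ) 2) : ‖a‖ ^ 2 = ∑' i, (a i) ^ 2 := by
  have h := lp.norm_rpow_eq_tsum (p := 2) (by norm_num) a
  simpa [Real.rpow_natCast, sq_abs] using h

/-- The key formula for `Fell`. -/
lemma Fell_eq' (ε : ℝ) (a : lp (fun _ : ℕ => ℝ) 2) :
    (∑' i : ℕ, if i = ⌊1 / ε⌋₊ then 0 else (a i) ^ 2 : ℝ)
      = ‖a‖ ^ 2 - (a ⌊1 / ε⌋₊) ^ 2 := by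
  have h := Summable.tsum_eq_add_tsum_ite (summable_sq a) ⌊1 / ε⌋₊
  rw [norm_sq_eq, h]; ring

lemma Fell_eq (ε : ℝ) (a : lp (fun _ : ℕ => ℝ) 2) :
    Fell ε a = ((‖a‖ ^ 2 - (a ⌊1 / ε⌋₊) ^ 2 : ℝ) : EReal) := by
  unfold Fell; exact congrArg _ (Fell_eq' ε a)

/-- Along any scale sequence `εₙ → 0⁺` and any `pₙ → x` in `ℓ²`, `Fell (εₙ) pₙ → Hell x`. -/
lemma Fell_tendsto (ε : ℕ → ℝ) (hpos : ∀ n, 0 < ε n) (hε : Tendsto ε atTop (nhds 0))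
    (p : ℕ → lp (fun _ : ℕ => ℝ) 2) (x : lp (fun _ : ℕ => ℝ) 2)
    (hp : Tendsto p atTop (nhds x)) :
    Tendsto (fun n => Fell (ε n) (p n)) atTop (nhds (Hell x)) := by
  set k : ℕ → ℕ := fun n => ⌊1 / ε n⌋₊ with hk
  have hkt : Tendsto k atTop atTop := by
    apply tendsto_nat_floor_atTop.comp
    simp only [one_div]
    exact Tendsto.inv_tendsto_nhdsGT_zero
      (tendsto_nhdsWithin_of_tendsto_nhds_of_eventually_within _ hε
        (Eventually.of_forall hpos))
  have hx0 : Tendsto (fun i => x i) atTop (nhds 0) := by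
    rw [tendsto_zero_iff_abs_tendsto_zero _]
    have h1 : Tendsto (fun i => (x i) ^ 2) atTop (nhds 0) :=
      (summable_sq x).tendsto_atTop_zero
    have h2 : Tendsto (fun i => Real.sqrt ((x i) ^ 2)) atTop (nhds (Real.sqrt 0)) :=
      (Real.continuous_sqrt.tendsto 0).comp h1
    simpa [Real.sqrt_sq_eq_abs, Function.comp_def] using h2
  have hdist : Tendsto (fun n => ‖p n - x‖) atTop (nhds 0) :=
    (tendsto_iff_norm_sub_tendsto_zero).1 hp
  have hpk : Tendsto (fun n => p n (k n)) atTop (nhds 0) := by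
    apply squeeze_zero_norm (a := fun n => ‖p n - x‖ + |x (k n)|)
    · intro n
      have h1 : |p n (k n) - x (k n)| ≤ ‖p n - x‖ := by
        have h := lp.norm_apply_le_norm (p := 2) (by norm_num) (p n - x) (k n)
        simpa using h
      have h2 : |p n (k n)| ≤ |p n (k n) - x (k n)| + |x (k n)| := by
        have h3 := abs_add_le (p n (k n) - x (k n)) (x (k n))
        simpa using h3
      calc ‖p n (k n)‖ = |p n (k n)| := rfl
        _ ≤ |p n (k n) - x (k n)| + |x (k n)| := h2
        _ ≤ ‖p n - x‖ + |x (k n)| := add_le_add_left h1 _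
    · have h3 : Tendsto (fun n => |x (k n)|) atTop (nhds 0) := by
        have := (continuous_abs.tendsto (0 : ℝ)).comp (hx0.comp hkt)
        simpa [Function.comp_def] using this
      simpa using hdist.add h3
  have hreal : Tendsto (fun n => ‖p n‖ ^ 2 - (p n (k n)) ^ 2) atTop (nhds (‖x‖ ^ 2)) := by
    have h1 : Tendsto (fun n => ‖p n‖ ^ 2) atTop (nhds (‖x‖ ^ 2)) :=
      ((continuous_norm.tendsto x).comp hp).pow 2
    have h2 : Tendsto (fun n => (p n (k n)) ^ 2) atTop (nhds 0) := by
      simpa using hpk.pow 2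
    simpa using h1.sub h2
  have heq : (fun n => Fell (ε n) (p n))
      = fun n => ((‖p n‖ ^ 2 - (p n (k n)) ^ 2 : ℝ) : EReal) :=
    funext fun n => Fell_eq (ε n) (p n)
  rw [heq]
  exact (continuous_coe_real_ereal.tendsto _).comp hreal

/-- `‖lp.single 2 (n+1) n‖ = n`. -/
lemma norm_p_single (n : ℕ) :
    ‖lp.single (E := fun _ : ℕ => ℝ) 2 (n + 1) ((n : ℝ))‖ = n := by
  have h := lp.norm_single (p := 2) (E := fun _ : ℕ => ℝ) (by norm_num)
    (n + 1) ((n : ℝ))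
  simpa using h

theorem gammaConv_not_varEquiv_counterexample :
    GammaConv Fell Hell ∧ ¬ VarEquiv Fell (fun _ => Hell) := by
  constructor
  · constructor
    · intro ε hpos hε p x hp
      have h := (Fell_tendsto ε hpos hε p x hp).liminf_eq
      rw [h]
    · intro ε hpos hε x
      refine ⟨fun _ => x, tendsto_const_nhds, ?_⟩
      refine limsup_le_of_le (by isBoundedDefault) (Eventually.of_forall fun n => ?_)
      rw [Fell_eq]
      show ((‖x‖ ^ 2 - (x ⌊1 / ε n⌋₊) ^ 2 : ℝ) : EReal) ≤ ((‖x‖ ^ 2 : ℝ) : EReal)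
      exact_mod_cast sub_le_self _ (sq_nonneg _)
  · rintro ⟨-, δ, -, -, -, hmain⟩
    set p : ℕ → lp (fun _ : ℕ => ℝ) 2 := fun n => lp.single 2 (n + 1) ((n : ℝ)) with hpdef
    have hfloor : ∀ n : ℕ, ⌊1 / ((1 : ℝ) / ((n : ℝ) + 1))⌋₊ = n + 1 := fun n => by
      rw [one_div_one_div]
      exact_mod_cast Nat.floor_natCast (n + 1)
    have hF0 : ∀ n : ℕ, Fell (1 / ((n : ℝ) + 1)) (p n) = ((0 : ℝ) : EReal) := by
      intro n
      unfold Fell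
      congr 1
      have h : (fun i : ℕ => if i = ⌊1 / ((1 : ℝ) / ((n : ℝ) + 1))⌋₊ then 0 else (p n i) ^ 2)
          = fun _ => (0 : ℝ) := by
        funext i
        simp only [hpdef]
        rw [hfloor n]
        by_cases h : i = n + 1
        · simp [h]
        · rw [if_neg h, lp.single_apply_ne (E := fun _ : ℕ => ℝ) 2 (n + 1) ((n : ℝ)) h]
          norm_num
      rw [h, tsum_zero]
    obtain ⟨q, hlim, hdisj⟩ := hmain (fun n : ℕ => 1 / ((n : ℝ) + 1))
      (fun n => by positivity) tendsto_one_div_add_atTop_nhds_zero_nat p 0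
      (fun n => (hF0 n).le)
    have hlim' : limsup (fun n => Hell (q n)) atTop ≤ 0 := by
      have heq : (fun n => (fun _ => Hell) (δ ((fun n : ℕ => 1 / ((n : ℝ) + 1)) n)) (q n)
          - Fell ((fun n : ℕ => 1 / ((n : ℝ) + 1)) n) (p n)) = fun n => Hell (q n) := by
        funext n
        show Hell (q n) - Fell (1 / ((n : ℝ) + 1)) (p n) = Hell (q n)
        rw [hF0 n]
        simp
      rwa [heq] at hlim
    rcases hdisj with ⟨-, hqu⟩ | hd
    · -- `q` unbounded, but bounded energy forces it bounded: contradiction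
      have hev : ∀ᶠ n in atTop, Hell (q n) < 1 :=
        eventually_lt_of_limsup_lt (lt_of_le_of_lt hlim' (by norm_num))
      obtain ⟨N, hN⟩ := eventually_atTop.1 hev
      apply hqu
      apply isBounded_iff_forall_norm_le.2
      refine ⟨1 + ∑ i ∈ Finset.range N, ‖q i‖, ?_⟩
      rintro y ⟨n, rfl⟩
      have h5 : (0 : ℝ) ≤ ∑ i ∈ Finset.range N, ‖q i‖ :=
        Finset.sum_nonneg fun i _ => norm_nonneg _
      by_cases h : n < N
      · have h1 : ‖q n‖ ≤ ∑ i ∈ Finset.range N, ‖q i‖ :=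
          Finset.single_le_sum (fun i _ => norm_nonneg _) (Finset.mem_range.2 h)
        linarith
      · have h2 := hN n (le_of_not_gt h)
        have h3 : ‖q n‖ ^ 2 < 1 := by
          have h4 : ((‖q n‖ ^ 2 : ℝ) : EReal) < ((1 : ℝ) : EReal) := by
            rw [EReal.coe_one]
            exact h2
          exact_mod_cast h4
        have h4 : ‖q n‖ ≤ 1 := by nlinarith [norm_nonneg (q n)]
        linarith
    · -- `dist (p n) (q n) → 0` forces `‖q n‖ → ∞`: contradiction with limsup ≤ 0
      have hd1 : ∀ᶠ n in atTop, dist (p n) (q n) ≤ 1 :=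
        hd.eventually (eventually_le_nhds one_pos)
      have hub : ∀ᶠ n in atTop, (1 : EReal) ≤ Hell (q n) := by
        filter_upwards [hd1, eventually_ge_atTop 2] with n h1 h2
        have hn2 : (2 : ℝ) ≤ (n : ℝ) := by exact_mod_cast h2
        have hq : 1 ≤ ‖q n‖ := by
          have h6 : ‖p n‖ - ‖q n‖ ≤ ‖p n - q n‖ := norm_sub_norm_le _ _
          have h7 : dist (p n) (q n) = ‖p n - q n‖ := dist_eq_norm _ _
          have h8 : ‖p n‖ = (n : ℝ) := norm_p_single n
          rw [h8] at h6
          linarith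
        have hq2 : (1 : ℝ) ≤ ‖q n‖ ^ 2 := by nlinarith
        show (1 : EReal) ≤ ((‖q n‖ ^ 2 : ℝ) : EReal)
        rw [← EReal.coe_one]
        exact_mod_cast hq2
      have hge : (1 : EReal) ≤ limsup (fun n => Hell (q n)) atTop :=
        le_limsup_of_frequently_le hub.frequently
      exact absurd (le_trans hge hlim') (by norm_num)
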